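/- arXiv:2101.00058 — 9 statements merged into one kernel-verified Lean document; each statement's English description precedes it below -/
import Mathlib

section
/- For any solve result ⟨H, U, s⟩ with respect to a set of coverage constraints CC, U is a subset of the set of examples not covered by H, and s is less than or equal to the true score of H. Moreover, s equals the true score of H if and only if U equals the set of examples not covered by H. -/
/-- Theorem lt: for any solve result ⟨H, U, s⟩ w.r.t. coverage constraints CC,
U ⊆ 𝒰(H), s ≤ 𝒮(H), and s = 𝒮(H) iff U = 𝒰(H). -/
theorem solve_result_bounds {E R : Type} [Fintype E] [DecidableEq E] [DecidableEq R]
    (pen : E → ℕ∞) (covers : Finset R → E → Prop)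
    [∀ H e, Decidable (covers H e)]
    (hpen : ∀ e, pen e ≠ 0)
    (CC : Set (E × (Finset R → Prop)))
    (hCC : ∀ c ∈ CC, ∀ H : Finset R, covers H c.1 → c.2 H)
    (H : Finset R) (U : Finset E) (s : ℕ∞)
    (hU : ∀ e, e ∈ U ↔ ∃ F, (e, F) ∈ CC ∧ ¬ F H)
    (hs : s = (H.card : ℕ∞) + ∑ u ∈ U, pen u)
    (hfin : s ≠ ⊤) :
    U ⊆ Finset.univ.filter (fun e => ¬ covers H e) ∧
    s ≤ (H.card : ℕ∞) + ∑ e ∈ Finset.univ.filter (fun e => ¬ covers H e), pen e ∧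
    (s = (H.card : ℕ∞) + ∑ e ∈ Finset.univ.filter (fun e => ¬ covers H e), pen e ↔
      U = Finset.univ.filter (fun e => ¬ covers H e)) := by
  have hsub : U ⊆ Finset.univ.filter (fun e => ¬ covers H e) := by
    intro e he
    simp only [Finset.mem_filter, Finset.mem_univ, true_and]
    obtain ⟨F, hF, hFH⟩ := (hU e).1 he
    exact fun hc => hFH (hCC (e, F) hF H hc)
  refine ⟨hsub, ?_, ?_⟩
  · rw [hs]
    exact add_le_add (le_refl _) (Finset.sum_le_sum_of_subset (f := pen) hsub)
  · constructor
    · intro heq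
      have hUfin : ∑ u ∈ U, pen u ≠ ⊤ := by
        intro h; apply hfin; rw [hs, h]; simp
      have hsum : ∑ u ∈ U, pen u
          = ∑ e ∈ Finset.univ.filter (fun e => ¬ covers H e), pen e := by
        rw [hs] at heq
        exact WithTop.add_left_cancel (WithTop.natCast_ne_top _) heq
      have hdiff := Finset.sum_sdiff (f := pen) hsub
      rw [← hsum] at hdiff
      have hzero : ∑ e ∈ (Finset.univ.filter (fun e => ¬ covers H e)) \ U, pen e = 0 := by
        have h2 : ∑ e ∈ (Finset.univ.filter (fun e => ¬ covers H e)) \ U, pen e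
            + ∑ u ∈ U, pen u = 0 + ∑ u ∈ U, pen u := by
          rw [hdiff, zero_add]
        exact WithTop.add_right_cancel hUfin h2
      have hempty : (Finset.univ.filter (fun e => ¬ covers H e)) \ U = ∅ := by
        by_contra hne
        obtain ⟨e, he⟩ := Finset.nonempty_iff_ne_empty.2 hne
        exact hpen e (Finset.sum_eq_zero_iff.1 hzero e he)
      exact Finset.Subset.antisymm hsub (Finset.sdiff_eq_empty_iff_subset.1 hempty)
    · intro h; rw [hs, h]
end

section
/- If ⟨H, U, s⟩ is an optimal solve result with respect to a set of coverage constraints CC (i.e., no solve result has strictly smaller score), and H is not an optimal inductive solution of the task, then there exists a counterexample to H not in U, i.e., an example e ∉ U that is not covered by H. -/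
/-- Corollary re: if ⟨H, U, s⟩ is an optimal solve result for CC and H is not an
optimal inductive solution of the (satisfiable) task, then there is a
counterexample to H not in U. -/
theorem optimal_solve_result_counterexample {E R : Type} [Fintype E] [DecidableEq E] [DecidableEq R]
    (pen : E → ℕ∞) (covers : Finset R → E → Prop)
    [∀ H e, Decidable (covers H e)]
    (CC : Set (E × (Finset R → Prop)))
    (hCC : ∀ c ∈ CC, ∀ H : Finset R, covers H c.1 → c.2 H)
    (score : Finset R → ℕ∞)
    (hscore : ∀ H' : Finset R,
      score H' = (H'.card : ℕ∞) + ∑ e ∈ Finset.univ.filter (fun e => ¬ covers H' e), pen e)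
    (H : Finset R) (U : Finset E) (s : ℕ∞)
    (hU : ∀ e, e ∈ U ↔ ∃ F, (e, F) ∈ CC ∧ ¬ F H)
    (hs : s = (H.card : ℕ∞) + ∑ u ∈ U, pen u)
    (hfin : s ≠ ⊤)
    (hopt : ∀ (H' : Finset R) (U' : Finset E) (s' : ℕ∞),
      (∀ e, e ∈ U' ↔ ∃ F, (e, F) ∈ CC ∧ ¬ F H') →
      s' = (H'.card : ℕ∞) + ∑ u ∈ U', pen u → s' ≠ ⊤ → s ≤ s')
    (hsat : ∃ H' : Finset R, score H' ≠ ⊤)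
    (hnotopt : ¬ (score H ≠ ⊤ ∧ ∀ H' : Finset R, score H ≤ score H')) :
    ∃ e, e ∉ U ∧ ¬ covers H e := by
  classical
  by_contra hcon
  push_neg at hcon
  -- every uncovered example is in U; also every e ∈ U is uncovered (by hCC)
  have hUeq : U = Finset.univ.filter (fun e => ¬ covers H e) := by
    apply Finset.ext
    intro e
    simp only [Finset.mem_filter, Finset.mem_univ, true_and]
    constructor
    · intro he
      obtain ⟨F, hF, hnF⟩ := (hU e).1 he
      intro hc
      exact hnF (hCC (e, F) hF H hc)
    · intro hnc
      by_contra hnU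
      exact hnc (hcon e hnU)
  have hscoreH : score H = s := by
    rw [hscore H, hs, hUeq]
  apply hnotopt
  refine ⟨by rw [hscoreH]; exact hfin, fun H' => ?_⟩
  by_cases htop : score H' = ⊤
  · rw [htop]; exact le_top
  · set U' : Finset E := Finset.univ.filter (fun e => ∃ F, (e, F) ∈ CC ∧ ¬ F H') with hU'def
    have hU' : ∀ e, e ∈ U' ↔ ∃ F, (e, F) ∈ CC ∧ ¬ F H' := by
      intro e; simp [hU'def]
    have hsub : U' ⊆ Finset.univ.filter (fun e => ¬ covers H' e) := by
      intro e he
      obtain ⟨F, hF, hnF⟩ := (hU' e).1 he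
      simp only [Finset.mem_filter, Finset.mem_univ, true_and]
      intro hc
      exact hnF (hCC (e, F) hF H' hc)
    have hle : (H'.card : ℕ∞) + ∑ u ∈ U', pen u ≤ score H' := by
      rw [hscore H']
      exact add_le_add le_rfl (Finset.sum_le_sum_of_subset hsub)
    have hs'fin : (H'.card : ℕ∞) + ∑ u ∈ U', pen u ≠ ⊤ :=
      fun h => htop (top_le_iff.mp (h ▸ hle))
    have := hopt H' U' _ hU' rfl hs'fin
    rw [hscoreH]
    exact this.trans hle
end

section
/- The CDILP procedure terminates on any well-formed learning task: assuming the conflict analysis method is valid (it always produces a coverage constraint whose formula does not accept the current hypothesis, for a counterexample not in U), the hypothesis-search phase can never produce the same solve result in two distinct iterations, so since there are only finitely many solve results, the loop terminates. -/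
/-- Termination of CDILP: there is no infinite run of the CDILP loop, i.e. if for
every n we have a solve result ⟨H n, U n, s n⟩ for CC n, a counterexample ce n ∉ U n
not covered by H n, and a valid conflict-analysis result F n (a coverage constraint
whose formula does not accept H n) added to CC (n+1), then we reach a contradiction:
the same solve result can never be produced twice and there are finitely many. -/
theorem cdilp_terminates {E R : Type} [Fintype E] [Fintype R] [DecidableEq E] [DecidableEq R]
    (pen : E → ℕ∞) (covers : Finset R → E → Prop)
    (CC : ℕ → Set (E × (Finset R → Prop)))
    (H : ℕ → Finset R) (U : ℕ → Finset E) (s : ℕ → ℕ∞)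
    (ce : ℕ → E) (F : ℕ → Finset R → Prop)
    (hmono : ∀ m n : ℕ, m ≤ n → CC m ⊆ CC n)
    (hCC : ∀ n, ∀ c ∈ CC n, ∀ H' : Finset R, covers H' c.1 → c.2 H')
    (hU : ∀ n e, e ∈ U n ↔ ∃ G, (e, G) ∈ CC n ∧ ¬ G (H n))
    (hs : ∀ n, s n = ((H n).card : ℕ∞) + ∑ u ∈ U n, pen u)
    (hsfin : ∀ n, s n ≠ ⊤)
    (hce : ∀ n, ce n ∉ U n ∧ ¬ covers (H n) (ce n))
    (hF : ∀ n, ¬ F n (H n) ∧ (ce n, F n) ∈ CC (n + 1) ∧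
      (∀ H' : Finset R, covers H' (ce n) → F n H')) :
    False := by
  obtain ⟨m, n, hmn, heq⟩ : ∃ m n : ℕ, m ≠ n ∧ (H m, U m) = (H n, U n) :=
    Finite.exists_ne_map_eq_of_infinite (fun k => (H k, U k))
  wlog hlt : m < n generalizing m n
  · exact this n m hmn.symm heq.symm (lt_of_le_of_ne (not_lt.mp hlt) hmn.symm)
  have hH : H m = H n := (Prod.mk.injEq _ _ _ _).mp heq |>.1
  have hUeq : U m = U n := (Prod.mk.injEq _ _ _ _).mp heq |>.2
  have hmem : (ce m, F m) ∈ CC n := hmono (m + 1) n hlt ((hF m).2.1)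
  have : ce m ∈ U n := (hU n (ce m)).mpr ⟨F m, hmem, by rw [← hH]; exact (hF m).1⟩
  exact (hce m).1 (hUeq ▸ this)
end

section
/- If the CDILP procedure returns a hypothesis H, then H is an optimal inductive solution of the task; and if the task is unsatisfiable (no hypothesis has finite score), CDILP returns UNSATISFIABLE. In particular, if the task is satisfiable, the hypothesis returned upon termination (when the optimal solve result ⟨H, U, s⟩ satisfies U = 𝒰(H)) has minimal score among all hypotheses. -/
/-- Soundness of CDILP: (1) if CDILP returns a hypothesis H (i.e. the optimal solve
result ⟨H, U, s⟩ satisfies U = 𝒰(H)), then H is an optimal inductive solution;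
(2) if the task is unsatisfiable (no hypothesis has finite score) then no such
terminating solve result exists, so CDILP returns UNSATISFIABLE. -/
theorem cdilp_sound {E R : Type} [Fintype E] [DecidableEq E] [DecidableEq R]
    (pen : E → ℕ∞) (covers : Finset R → E → Prop)
    [∀ H e, Decidable (covers H e)]
    (CC : Set (E × (Finset R → Prop)))
    (hCC : ∀ c ∈ CC, ∀ H : Finset R, covers H c.1 → c.2 H)
    (score : Finset R → ℕ∞)
    (hscore : ∀ H' : Finset R,
      score H' = (H'.card : ℕ∞) + ∑ e ∈ Finset.univ.filter (fun e => ¬ covers H' e), pen e) :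
    (∀ (H : Finset R) (U : Finset E) (s : ℕ∞),
      (∀ e, e ∈ U ↔ ∃ F, (e, F) ∈ CC ∧ ¬ F H) →
      s = (H.card : ℕ∞) + ∑ u ∈ U, pen u → s ≠ ⊤ →
      (∀ (H' : Finset R) (U' : Finset E) (s' : ℕ∞),
        (∀ e, e ∈ U' ↔ ∃ F, (e, F) ∈ CC ∧ ¬ F H') →
        s' = (H'.card : ℕ∞) + ∑ u ∈ U', pen u → s' ≠ ⊤ → s ≤ s') →
      U = Finset.univ.filter (fun e => ¬ covers H e) →
      (score H ≠ ⊤ ∧ ∀ H' : Finset R, score H ≤ score H')) ∧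
    ((∀ H' : Finset R, score H' = ⊤) →
      ¬ ∃ (H : Finset R) (U : Finset E) (s : ℕ∞),
        (∀ e, e ∈ U ↔ ∃ F, (e, F) ∈ CC ∧ ¬ F H) ∧
        s = (H.card : ℕ∞) + ∑ u ∈ U, pen u ∧ s ≠ ⊤ ∧
        U = Finset.univ.filter (fun e => ¬ covers H e)) := by
  classical
  constructor
  · intro H U s hU hs hsne hopt hUeq
    have hsscore : s = score H := by
      rw [hscore H, hs, hUeq]
    constructor
    · rw [← hsscore]; exact hsne
    · intro H'
      -- define the solve result for H'
      set U' : Finset E := Finset.univ.filter (fun e => ∃ F, (e, F) ∈ CC ∧ ¬ F H') with hU'def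
      have hU'mem : ∀ e, e ∈ U' ↔ ∃ F, (e, F) ∈ CC ∧ ¬ F H' := by
        intro e; simp [hU'def]
      have hsub : U' ⊆ Finset.univ.filter (fun e => ¬ covers H' e) := by
        intro e he
        rcases (hU'mem e).1 he with ⟨F, hF, hnF⟩
        simp only [Finset.mem_filter, Finset.mem_univ, true_and]
        intro hc
        exact hnF (hCC (e, F) hF H' hc)
      have hsum : (∑ u ∈ U', pen u) ≤ ∑ e ∈ Finset.univ.filter (fun e => ¬ covers H' e), pen e :=
        Finset.sum_le_sum_of_subset hsub
      have hle : (H'.card : ℕ∞) + ∑ u ∈ U', pen u ≤ score H' := by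
        rw [hscore H']
        exact add_le_add_right hsum _
      by_cases h' : (H'.card : ℕ∞) + ∑ u ∈ U', pen u = ⊤
      · have : score H' = ⊤ := top_le_iff.mp (h' ▸ hle)
        rw [this, ← hsscore]; exact le_top
      · calc score H = s := hsscore.symm
          _ ≤ (H'.card : ℕ∞) + ∑ u ∈ U', pen u := hopt H' U' _ hU'mem rfl h'
          _ ≤ score H' := hle
  · intro hall ⟨H, U, s, hU, hs, hsne, hUeq⟩
    apply hsne
    rw [hs, hUeq, ← hscore H, hall H]
end

section
/- Let e be a CDPI example and I a model of B ∪ e_ctx extending e's partial interpretation. For any hypothesis H ⊆ S_M, I is an accepting answer set of e with respect to B ∪ H if and only if the translation of ⟨I, e⟩ accepts H; that is, if and only if (1) H contains no rule of which I is not a model, and (2) for every subset-minimal set of rules {R¹,…,Rⁿ} ⊆ S_M such that I has a non-empty unfounded subset with respect to B ∪ e_ctx ∪ (S_M \ {R¹,…,Rⁿ}), H contains at least one of R¹,…,Rⁿ. -/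
/-- Theorem translateCDPI: for a CDPI e and an interpretation I that is a model of
B ∪ e_ctx extending e_pi, a hypothesis H ⊆ S_M has I ∈ AAS(e, B ∪ H) iff the
translation of ⟨I, e⟩ accepts H: H contains no rule of which I is not a model, and
for every subset-minimal set of rules X ⊆ S_M such that I has a non-empty unfounded
subset w.r.t. B ∪ e_ctx ∪ (S_M \ X), H intersects X. Answer sets are characterised
via unfounded sets, and unfoundedness is antitone in the program. -/
theorem translation_characterises_AAS {Rule Interp : Type} [DecidableEq Rule]
    (isModel : Interp → Rule → Prop)
    (unfounded : Interp → Finset Rule → Prop)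
    (answerSet : Interp → Finset Rule → Prop)
    (hchar : ∀ (I : Interp) (P : Finset Rule),
      answerSet I P ↔ (∀ R ∈ P, isModel I R) ∧ ¬ unfounded I P)
    (hanti : ∀ (I : Interp) (P P' : Finset Rule), P ⊆ P' → unfounded I P' → unfounded I P)
    (B ctx SM : Finset Rule) (I : Interp)
    (hIB : ∀ R ∈ B ∪ ctx, isModel I R)
    (H : Finset Rule) (hH : H ⊆ SM) :
    answerSet I (B ∪ ctx ∪ H) ↔
      ((∀ R ∈ SM, ¬ isModel I R → R ∉ H) ∧
       ∀ X ⊆ SM,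
         (unfounded I (B ∪ ctx ∪ (SM \ X)) ∧
          ∀ Y ⊂ X, ¬ unfounded I (B ∪ ctx ∪ (SM \ Y))) →
         (H ∩ X).Nonempty) := by
  rw [hchar]
  constructor
  · rintro ⟨hmod, hnu⟩
    constructor
    · intro R _ hR hRH
      exact hR (hmod R (by simp [hRH]))
    · rintro X hXSM ⟨hXu, -⟩
      by_contra hemp
      rw [Finset.not_nonempty_iff_eq_empty] at hemp
      have hHsub : H ⊆ SM \ X := by
        intro r hr
        refine Finset.mem_sdiff.mpr ⟨hH hr, ?_⟩
        intro hrX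
        have : r ∈ H ∩ X := Finset.mem_inter.mpr ⟨hr, hrX⟩
        simp [hemp] at this
      exact hnu (hanti I _ _ (Finset.union_subset_union_right hHsub) hXu)
  · rintro ⟨hmod, hmin⟩
    constructor
    · intro R hR
      rcases Finset.mem_union.mp hR with h | h
      · exact hIB R h
      · by_contra hnm
        exact hmod R (hH h) hnm (by exact h)
    · intro hu
      -- H = SM \ (SM \ H)
      have hX0 : unfounded I (B ∪ ctx ∪ (SM \ (SM \ H))) := by
        have : SM \ (SM \ H) = H := by
          ext r; simp only [Finset.mem_sdiff]
          constructor
          · rintro ⟨hs, hn⟩; by_contra hrh; exact hn ⟨hs, hrh⟩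
          · intro hrh; exact ⟨hH hrh, fun h => h.2 hrh⟩
        rw [this]; exact hu
      -- find a minimal X ⊆ SM \ H with the unfoundedness property
      have hwf : WellFounded ((· ⊂ ·) : Finset Rule → Finset Rule → Prop) :=
        IsWellFounded.wf
      obtain ⟨X, ⟨hXsub, hXu⟩, hXmin⟩ :=
        hwf.has_min {X | X ⊆ SM \ H ∧ unfounded I (B ∪ ctx ∪ (SM \ X))}
          ⟨SM \ H, Finset.Subset.refl _, hX0⟩
      have hXSM : X ⊆ SM := hXsub.trans (Finset.sdiff_subset)
      have hne := hmin X hXSM ⟨hXu, fun Y hY hYu =>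
        hXmin Y ⟨(hY.subset).trans hXsub, hYu⟩ hY⟩
      obtain ⟨r, hr⟩ := hne
      rcases Finset.mem_inter.mp hr with ⟨hrH, hrX⟩
      exact (Finset.mem_sdiff.mp (hXsub hrX)).2 hrH
end

section
/- Conflict analysis for negative examples (ILASP3): let e be a negative CDPI and H a hypothesis not covering e. The iterative procedure with ψ_γ (full translation) terminates, returning F, and: (1) ⟨e, ¬F⟩ is a coverage constraint; (2) H is not accepted by ¬F; in fact F accepts exactly those hypotheses H' for which AAS(e, B∪H') is non-empty. -/
/-- Theorem neg_ilasp3: for a negative CDPI e and a hypothesis H not covering e,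
the iterative conflict analysis with ψ_γ = 𝒯 terminates (in at most 2^|S_M|
iterations), returning F such that (1) ⟨e, ¬F⟩ is a coverage constraint (every
hypothesis covering e is accepted by ¬F), (2) H is not accepted by ¬F, and in fact
F accepts exactly those H' with AAS(e, B∪H') non-empty. -/
theorem neg_conflict_analysis_ilasp3 {R Interp : Type} [Fintype R] [DecidableEq R]
    (aas tr : Interp → Finset R → Prop)
    (hchar : ∀ (I : Interp) (H' : Finset R), aas I H' ↔ tr I H')
    (H : Finset R) (hH : ∃ I : Interp, aas I H)
    (N : ℕ) (F : ℕ → Finset R → Prop) (Iseq : ℕ → Interp)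
    (h0 : ∀ H' : Finset R, ¬ F 0 H')
    (hstep : ∀ n < N,
      (∃ H' : Finset R, ¬ F n H' ∧ aas (Iseq n) H') ∧
      (∀ H' : Finset R, F (n + 1) H' ↔ F n H' ∨ tr (Iseq n) H'))
    (hexit : ¬ ∃ (I : Interp) (H' : Finset R), ¬ F N H' ∧ aas I H') :
    N ≤ 2 ^ Fintype.card R ∧
    (∀ H' : Finset R, (∀ I : Interp, ¬ aas I H') → ¬ F N H') ∧
    (¬ ¬ F N H) ∧
    (∀ H' : Finset R, F N H' ↔ ∃ I : Interp, aas I H') := by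
  classical
  -- forward direction of part 4
  have fwd : ∀ n ≤ N, ∀ H' : Finset R, F n H' → ∃ I : Interp, aas I H' := by
    intro n
    induction n with
    | zero => intro _ H' h; exact absurd h (h0 H')
    | succ n ih =>
      intro hn H' h
      have hnN : n < N := Nat.lt_of_succ_le hn
      have := ((hstep n hnN).2 H').mp h
      rcases this with h | h
      · exact ih (le_of_lt hnN) H' h
      · exact ⟨Iseq n, (hchar (Iseq n) H').mpr h⟩
  have bwd : ∀ H' : Finset R, (∃ I : Interp, aas I H') → F N H' := by
    intro H' ⟨I, hI⟩
    by_contra hF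
    exact hexit ⟨I, H', hF, hI⟩
  -- termination bound
  have hbound : N ≤ 2 ^ Fintype.card R := by
    set T : ℕ → Finset (Finset R) := fun n => Finset.univ.filter (F n) with hT
    have hssub : ∀ n < N, T n ⊂ T (n + 1) := by
      intro n hn
      obtain ⟨⟨H', hH'1, hH'2⟩, hiff⟩ := hstep n hn
      constructor
      · intro x hx
        simp only [hT, Finset.mem_filter, Finset.mem_univ, true_and] at hx ⊢
        exact (hiff x).mpr (Or.inl hx)
      · intro hsub
        have hmem : H' ∈ T (n + 1) := by
          simp only [hT, Finset.mem_filter, Finset.mem_univ, true_and]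
          exact (hiff H').mpr (Or.inr ((hchar (Iseq n) H').mp hH'2))
        have := hsub hmem
        simp only [hT, Finset.mem_filter, Finset.mem_univ, true_and] at this
        exact hH'1 this
    have hcard : ∀ n ≤ N, n ≤ (T n).card := by
      intro n
      induction n with
      | zero => intro _; exact Nat.zero_le _
      | succ n ih =>
        intro hn
        have hnN : n < N := Nat.lt_of_succ_le hn
        have h1 := ih (le_of_lt hnN)
        have h2 := Finset.card_lt_card (hssub n hnN)
        omega
    calc N ≤ (T N).card := hcard N le_rfl
      _ ≤ Fintype.card (Finset R) := Finset.card_le_univ _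
      _ = 2 ^ Fintype.card R := Fintype.card_finset
  refine ⟨hbound, ?_, ?_, ?_⟩
  · intro H' hno hF
    obtain ⟨I, hI⟩ := fwd N le_rfl H' hF
    exact hno I hI
  · intro h; exact h (bwd H hH)
  · intro H'
    exact ⟨fwd N le_rfl H', bwd H'⟩
end

section
/- Correctness of the ω-formula for orderings: for a CDOE-setting with hypothesis space S_M of weak constraints, interpretations A₁, A₂, and comparison operator ≺, a hypothesis H ⊆ S_M satisfies ω(T, A₁, A₂, ≺) if and only if A₁ ≺_{B∪H} A₂, where ω is the lexicographic disjunction over priority levels l₁ > … > lₙ of 'equal at all higher levels and ≺ at this level' conditions on optimisation differences. -/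
/-- Theorem omega (for ≺ = <): with additive optimisation differences
Δ^{B∪H}_l(A₁,A₂) = Δ^B_l(A₁,A₂) + Σ_{R∈H} Δ^R_l(A₁,A₂), a hypothesis H ⊆ S_M
satisfies ω(T,A₁,A₂,<) (the lexicographic disjunction over levels of
"Σ_{R∈H} Δ^R_l < Δ^B_l(A₂,A₁) and equality at all higher levels") iff
A₁ ≺_{B∪H} A₂, i.e. A₁ dominates A₂ w.r.t. B ∪ H. -/
theorem omega_correct {R L : Type} [DecidableEq R] [LinearOrder L] [Fintype L]
    (SM H : Finset R) (hH : H ⊆ SM)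
    (dB : L → ℤ) (dR : R → L → ℤ)
    (P1 P2 : L → ℤ)
    (hadd : ∀ l : L, P1 l - P2 l = dB l + ∑ r ∈ H, dR r l) :
    ((∃ l : L, (∑ r ∈ H, dR r l) < -dB l ∧ ∀ m, l < m → (∑ r ∈ H, dR r m) = -dB m) ↔
     (∃ l : L, P1 l < P2 l ∧ ∀ m, l < m → P1 m = P2 m)) := by
  have key : ∀ l : L, ((∑ r ∈ H, dR r l) < -dB l ↔ P1 l < P2 l) ∧
      ((∑ r ∈ H, dR r l) = -dB l ↔ P1 l = P2 l) := by
    intro l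
    have h := hadd l
    constructor
    · constructor <;> intro h' <;> linarith
    · constructor <;> intro h' <;> [linarith; linarith]
  constructor <;> rintro ⟨l, h1, h2⟩ <;> refine ⟨l, ?_, fun m hm => ?_⟩
  · exact (key l).1.mp h1
  · exact (key m).2.mp (h2 m hm)
  · exact (key l).1.mpr h1
  · exact (key m).2.mpr (h2 m hm)
end

section
/- Validity of conflict analysis for brave ordering examples: let o = ⟨e₁, e₂, ≺⟩ be a brave CDOE and H a hypothesis that does not cover o. The iterative procedure (F := ⊥; while there exist ⟨I₁,I₂⟩ and H' with F not accepting H', I₁ ∈ AAS(e₁,B∪H'), I₂ ∈ AAS(e₂,B∪H'), I₁ ≺_{B∪H'} I₂, add the disjunct ψ(I₁,I₂,…)) terminates and returns F such that ⟨o, F⟩ is a coverage constraint and F does not accept H, for ψ = ψ_γ defined as 𝒯(I₁,e₁,T) ∧ 𝒯(I₂,e₂,T) ∧ ω(T,I₁,I₂,≺). -/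
/-- Theorem translateCDOEterminate (for ψ_γ): iterative conflict analysis for a
brave CDOE o = ⟨e₁,e₂,≺⟩ and a hypothesis H not covering o terminates (in at most
2^|S_M| iterations) and returns F such that ⟨o, F⟩ is a coverage constraint (every
hypothesis covering o is accepted by F) and F does not accept H, where each
disjunct is ψ_γ = 𝒯(I₁,e₁,T) ∧ 𝒯(I₂,e₂,T) ∧ ω(T,I₁,I₂,≺). -/
theorem brave_ordering_conflict_analysis {R Interp : Type} [Fintype R] [DecidableEq R]
    (aas1 aas2 tr1 tr2 : Interp → Finset R → Prop)
    (ord omega : Interp → Interp → Finset R → Prop)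
    (hchar1 : ∀ (I : Interp) (H' : Finset R), aas1 I H' ↔ tr1 I H')
    (hchar2 : ∀ (I : Interp) (H' : Finset R), aas2 I H' ↔ tr2 I H')
    (homega : ∀ (I1 I2 : Interp) (H' : Finset R), omega I1 I2 H' ↔ ord I1 I2 H')
    (H : Finset R)
    (hH : ¬ ∃ I1 I2, aas1 I1 H ∧ aas2 I2 H ∧ ord I1 I2 H)
    (N : ℕ) (F : ℕ → Finset R → Prop) (I1s I2s : ℕ → Interp)
    (h0 : ∀ H' : Finset R, ¬ F 0 H')
    (hstep : ∀ n < N,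
      (∃ H' : Finset R, ¬ F n H' ∧ aas1 (I1s n) H' ∧ aas2 (I2s n) H' ∧
        ord (I1s n) (I2s n) H') ∧
      (∀ H' : Finset R, F (n + 1) H' ↔
        F n H' ∨ (tr1 (I1s n) H' ∧ tr2 (I2s n) H' ∧ omega (I1s n) (I2s n) H')))
    (hexit : ¬ ∃ (I1 I2 : Interp) (H' : Finset R),
      ¬ F N H' ∧ aas1 I1 H' ∧ aas2 I2 H' ∧ ord I1 I2 H') :
    N ≤ 2 ^ Fintype.card R ∧
    (∀ H' : Finset R, (∃ I1 I2, aas1 I1 H' ∧ aas2 I2 H' ∧ ord I1 I2 H') → F N H') ∧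
    ¬ F N H := by

  classical
  have hw : ∀ n, n < N → ∃ H', ¬ F n H' ∧ aas1 (I1s n) H' ∧ aas2 (I2s n) H' ∧
      ord (I1s n) (I2s n) H' := fun n hn => (hstep n hn).1
  choose w hw1 hw2 hw3 hw4 using hw
  have mono : ∀ m, m ≤ N → ∀ n, n ≤ m → ∀ H', F n H' → F m H' := by
    intro m
    induction m with
    | zero => intro _ n hn H' h; interval_cases n; exact h
    | succ m ih =>
      intro hm n hn H' h
      rcases Nat.lt_or_ge n (m+1) with h1 | h1
      · have := ih (by omega) n (by omega) H' h
        exact ((hstep m (by omega)).2 H').mpr (Or.inl this)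
      · have : n = m + 1 := by omega
        subst this; exact h
  have waccept : ∀ n (hn : n < N), F (n+1) (w n hn) := by
    intro n hn
    exact ((hstep n hn).2 _).mpr (Or.inr ⟨(hchar1 _ _).mp (hw2 n hn),
      (hchar2 _ _).mp (hw3 n hn), (homega _ _ _).mpr (hw4 n hn)⟩)
  have key : ∀ i j : Fin N, (i : ℕ) < (j : ℕ) → w i i.2 ≠ w j j.2 := by
    intro i j hij heq
    have h1 : F j (w i i.2) := mono j (by omega) (i+1) (by omega) _ (waccept i i.2)
    rw [heq] at h1
    exact hw1 j j.2 h1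
  have hinj : Function.Injective (fun i : Fin N => w i i.2) := by
    intro i j hij
    rcases lt_trichotomy (i : ℕ) (j : ℕ) with h | h | h
    · exact absurd hij (key i j h)
    · exact Fin.ext h
    · exact absurd hij.symm (key j i h)
  have hcard : N ≤ 2 ^ Fintype.card R := by
    have := Fintype.card_le_of_injective _ hinj
    simpa [Fintype.card_finset] using this
  have hnotH : ∀ n, n ≤ N → ¬ F n H := by
    intro n
    induction n with
    | zero => exact fun _ => h0 H
    | succ n ih =>
      intro hn h
      rcases ((hstep n (by omega)).2 H).mp h with h | ⟨a, b, c⟩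
      · exact ih (by omega) h
      · exact hH ⟨I1s n, I2s n, (hchar1 _ _).mpr a, (hchar2 _ _).mpr b,
          (homega _ _ _).mp c⟩
  refine ⟨hcard, ?_, hnotH N le_rfl⟩
  rintro H' ⟨I1, I2, a, b, c⟩
  by_contra h
  exact hexit ⟨I1, I2, H', h, a, b, c⟩
end

section
/- Constraint propagation preserves soundness: if ⟨ce, F⟩ is a coverage constraint and, for every hypothesis H' not accepted by F, H' does not cover example e, then ⟨e, F⟩ is also a coverage constraint; moreover adding propagated constraints to CC preserves the property that for any solve result ⟨H, U, s⟩ of the enlarged CC, U ⊆ 𝒰(H) and s ≤ 𝒮(H). -/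
/-- Constraint propagation preserves soundness: if ⟨ce, F⟩ is a coverage constraint
and every hypothesis not accepted by F fails to cover e, then ⟨e, F⟩ is also a
coverage constraint; moreover any solve result ⟨H, U, s⟩ of the enlarged constraint
set CC ∪ {⟨e, F⟩} still satisfies U ⊆ 𝒰(H) and s ≤ 𝒮(H). -/
theorem constraint_propagation_sound {E R : Type} [Fintype E] [DecidableEq E] [DecidableEq R]
    (pen : E → ℕ∞) (covers : Finset R → E → Prop)
    [∀ H e, Decidable (covers H e)]
    (CC : Set (E × (Finset R → Prop)))
    (hCC : ∀ c ∈ CC, ∀ H' : Finset R, covers H' c.1 → c.2 H')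
    (ce e : E) (F : Finset R → Prop)
    (hce : ∀ H' : Finset R, covers H' ce → F H')
    (hprop : ∀ H' : Finset R, ¬ F H' → ¬ covers H' e) :
    (∀ H' : Finset R, covers H' e → F H') ∧
    (∀ (H : Finset R) (U : Finset E) (s : ℕ∞),
      (∀ x, x ∈ U ↔ ∃ G, (x, G) ∈ insert (e, F) CC ∧ ¬ G H) →
      s = (H.card : ℕ∞) + ∑ u ∈ U, pen u → s ≠ ⊤ →
      U ⊆ Finset.univ.filter (fun x => ¬ covers H x) ∧
      s ≤ (H.card : ℕ∞) + ∑ x ∈ Finset.univ.filter (fun x => ¬ covers H x), pen x) := by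
  constructor
  · intro H' hcov
    by_contra hF
    exact hprop H' hF hcov
  · intro H U s hU hs _
    have hsub : U ⊆ Finset.univ.filter (fun x => ¬ covers H x) := by
      intro x hx
      rcases (hU x).1 hx with ⟨G, hmem, hG⟩
      simp only [Finset.mem_filter, Finset.mem_univ, true_and]
      rcases Set.mem_insert_iff.1 hmem with h | h
      · obtain ⟨he, hF⟩ := Prod.mk.injEq .. ▸ h
        subst he
        exact hprop H (hF ▸ hG)
      · intro hcov
        exact hG (hCC _ h H hcov)
    refine ⟨hsub, ?_⟩
    rw [hs]
    exact add_le_add le_rfl (Finset.sum_le_sum_of_subset (f := pen) hsub)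
end
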